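/- In the setting of the unconstrained IPO bias result (integrable y⁽ⁱ⁾ : Ω → ℝ^{d_z} with E[y⁽ⁱ⁾] = P diag(x⁽ⁱ⁾) θ₀, and H, d_u invertible), the corrected estimator θ_u* = d_u⁻¹ H θ*, where θ* = H⁻¹ d(y), is unbiased: E[θ_u*] = θ₀. -/

import Mathlib

open Matrix MeasureTheory ProbabilityTheory

/-- The IPO Hessian `H = (1/(mδ)) Σᵢ diag(x⁽ⁱ⁾) Pᵀ (V̂⁽ⁱ⁾)⁻¹ V⁽ⁱ⁾ (V̂⁽ⁱ⁾)⁻¹ P diag(x⁽ⁱ⁾)`. -/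
noncomputable def ipoH {m dx dz : ℕ} (δ : ℝ) (x : Fin m → Fin dx → ℝ)
    (P : Matrix (Fin dz) (Fin dx) ℝ) (Vh V : Fin m → Matrix (Fin dz) (Fin dz) ℝ) :
    Matrix (Fin dx) (Fin dx) ℝ :=
  (1 / ((m : ℝ) * δ)) •
    ∑ i, diagonal (x i) * Pᵀ * (Vh i)⁻¹ * V i * (Vh i)⁻¹ * P * diagonal (x i)

/-- The IPO linear term `d = (1/(mδ)) Σᵢ diag(x⁽ⁱ⁾) Pᵀ (V̂⁽ⁱ⁾)⁻¹ y⁽ⁱ⁾`. -/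
noncomputable def ipoD {m dx dz : ℕ} (δ : ℝ) (x : Fin m → Fin dx → ℝ)
    (P : Matrix (Fin dz) (Fin dx) ℝ) (Vh : Fin m → Matrix (Fin dz) (Fin dz) ℝ)
    (y : Fin m → Fin dz → ℝ) : Fin dx → ℝ :=
  (1 / ((m : ℝ) * δ)) • ∑ i, (diagonal (x i) * Pᵀ * (Vh i)⁻¹) *ᵥ y i

/-- The unconstrained IPO portfolio `z*(θ, i) = (1/δ) (V̂⁽ⁱ⁾)⁻¹ P diag(x⁽ⁱ⁾) θ`. -/
noncomputable def ipoZ {m dx dz : ℕ} (δ : ℝ) (x : Fin m → Fin dx → ℝ)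
    (P : Matrix (Fin dz) (Fin dx) ℝ) (Vh : Fin m → Matrix (Fin dz) (Fin dz) ℝ)
    (i : Fin m) (θ : Fin dx → ℝ) : Fin dz → ℝ :=
  (1 / δ) • (((Vh i)⁻¹ * P * diagonal (x i)) *ᵥ θ)

/-- The IPO objective
`L(θ) = (1/m) Σᵢ [ -z*(θ,i)ᵀ y⁽ⁱ⁾ + (δ/2) z*(θ,i)ᵀ V⁽ⁱ⁾ z*(θ,i) ]`. -/
noncomputable def ipoL {m dx dz : ℕ} (δ : ℝ) (x : Fin m → Fin dx → ℝ)
    (P : Matrix (Fin dz) (Fin dx) ℝ) (Vh V : Fin m → Matrix (Fin dz) (Fin dz) ℝ)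
    (y : Fin m → Fin dz → ℝ) (θ : Fin dx → ℝ) : ℝ :=
  (1 / (m : ℝ)) * ∑ i, (-(ipoZ δ x P Vh i θ ⬝ᵥ y i)
      + (δ / 2) * (ipoZ δ x P Vh i θ ⬝ᵥ (V i *ᵥ ipoZ δ x P Vh i θ)))

/-- The unbiasing matrix `d_u = (1/(mδ)) Σᵢ diag(x⁽ⁱ⁾) Pᵀ (V̂⁽ⁱ⁾)⁻¹ P diag(x⁽ⁱ⁾)`. -/
noncomputable def ipoDu {m dx dz : ℕ} (δ : ℝ) (x : Fin m → Fin dx → ℝ)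
    (P : Matrix (Fin dz) (Fin dx) ℝ) (Vh : Fin m → Matrix (Fin dz) (Fin dz) ℝ) :
    Matrix (Fin dx) (Fin dx) ℝ :=
  (1 / ((m : ℝ) * δ)) • ∑ i, diagonal (x i) * Pᵀ * (Vh i)⁻¹ * P * diagonal (x i)

/-- The corrected estimator `θ_u* = d_u⁻¹ H θ*`, with `θ* = H⁻¹ d(y)`, is unbiased:
`E[θ_u*] = θ₀`. -/
theorem stmt_7 {m dx dz : ℕ} (hm : 0 < m) (δ : ℝ) (hδ : 0 < δ)
    (x : Fin m → Fin dx → ℝ) (P : Matrix (Fin dz) (Fin dx) ℝ)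
    (Vh V : Fin m → Matrix (Fin dz) (Fin dz) ℝ)
    (hVh : ∀ i, (Vh i).PosDef) (hV : ∀ i, (V i).PosDef)
    {Ω : Type} [MeasurableSpace Ω] (μ : Measure Ω) [IsProbabilityMeasure μ]
    (y : Fin m → Ω → Fin dz → ℝ) (θ₀ : Fin dx → ℝ)
    (hint : ∀ i j, Integrable (fun ω => y i ω j) μ)
    (hmean : ∀ i, (fun j => ∫ ω, y i ω j ∂μ) = P *ᵥ (diagonal (x i) *ᵥ θ₀))
    (hH : IsUnit (ipoH δ x P Vh V).det) (hDu : IsUnit (ipoDu δ x P Vh).det) :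
    (fun j => ∫ ω, ((ipoDu δ x P Vh)⁻¹ *ᵥ (ipoH δ x P Vh V *ᵥ
        ((ipoH δ x P Vh V)⁻¹ *ᵥ ipoD δ x P Vh (fun i => y i ω)))) j ∂μ) = θ₀ := by
  have hHH : ∀ v : Fin dx → ℝ, ipoH δ x P Vh V *ᵥ ((ipoH δ x P Vh V)⁻¹ *ᵥ v) = v := by
    intro v
    rw [Matrix.mulVec_mulVec, Matrix.mul_nonsing_inv _ hH, Matrix.one_mulVec]
  have hsum : ∀ (S : Fin m → Matrix (Fin dx) (Fin dx) ℝ) (v : Fin dx → ℝ) (k : Fin dx),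
      ((∑ i, S i) *ᵥ v) k = ∑ i, (S i *ᵥ v) k := by
    intro S v k
    show ∑ n, (∑ i, S i) k n * v n = ∑ i, ∑ n, S i k n * v n
    rw [Finset.sum_comm]
    refine Finset.sum_congr rfl fun n _ => ?_
    rw [Matrix.sum_apply, Finset.sum_mul]
  have hexp : ∀ k ω, ipoD δ x P Vh (fun i => y i ω) k
      = ∑ i, ∑ l, ((1 / ((m : ℝ) * δ)) * (diagonal (x i) * Pᵀ * (Vh i)⁻¹) k l) * y i ω l := by
    intro k ω
    show (1 / ((m : ℝ) * δ)) * (∑ i, (diagonal (x i) * Pᵀ * (Vh i)⁻¹) *ᵥ y i ω) k = _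
    rw [Finset.sum_apply, Finset.mul_sum]
    refine Finset.sum_congr rfl fun i _ => ?_
    show (1 / ((m : ℝ) * δ)) * ∑ l, (diagonal (x i) * Pᵀ * (Vh i)⁻¹) k l * y i ω l = _
    rw [Finset.mul_sum]
    exact Finset.sum_congr rfl fun l _ => (mul_assoc _ _ _).symm
  -- expectation of ipoD
  have hD : ∀ k, (∫ ω, ipoD δ x P Vh (fun i => y i ω) k ∂μ)
      = (ipoDu δ x P Vh *ᵥ θ₀) k := by
    intro k
    simp only [hexp k]
    rw [MeasureTheory.integral_finset_sum _
      (fun i _ => MeasureTheory.integrable_finset_sum _ fun l _ => (hint i l).const_mul _)]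
    have h1 : ∀ i : Fin m, (∫ ω, ∑ l, ((1 / ((m : ℝ) * δ)) *
        (diagonal (x i) * Pᵀ * (Vh i)⁻¹) k l) * y i ω l ∂μ)
        = ∑ l, ((1 / ((m : ℝ) * δ)) * (diagonal (x i) * Pᵀ * (Vh i)⁻¹) k l) *
          (∫ ω, y i ω l ∂μ) := by
      intro i
      rw [MeasureTheory.integral_finset_sum _ (fun l _ => (hint i l).const_mul _)]
      exact Finset.sum_congr rfl fun l _ => MeasureTheory.integral_const_mul _ _
    simp only [h1]
    have hmean' : ∀ (i : Fin m) l, (∫ ω, y i ω l ∂μ) = (P *ᵥ (diagonal (x i) *ᵥ θ₀)) l :=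
      fun i l => congrFun (hmean i) l
    simp only [hmean']
    have hRHS : (ipoDu δ x P Vh *ᵥ θ₀) k = ∑ i, (1 / ((m : ℝ) * δ)) *
        (((diagonal (x i) * Pᵀ * (Vh i)⁻¹) * (P * diagonal (x i))) *ᵥ θ₀) k := by
      show (((1 / ((m : ℝ) * δ)) • (∑ i, diagonal (x i) * Pᵀ * (Vh i)⁻¹ * P * diagonal (x i))) *ᵥ θ₀) k = _
      rw [Matrix.smul_mulVec, Pi.smul_apply, smul_eq_mul, hsum, Finset.mul_sum]
      exact Finset.sum_congr rfl fun i _ => by rw [← Matrix.mul_assoc]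
    rw [hRHS]
    refine Finset.sum_congr rfl fun i _ => ?_
    have heq : ((diagonal (x i) * Pᵀ * (Vh i)⁻¹) * (P * diagonal (x i))) *ᵥ θ₀
        = (diagonal (x i) * Pᵀ * (Vh i)⁻¹) *ᵥ (P *ᵥ (diagonal (x i) *ᵥ θ₀)) := by
      rw [Matrix.mulVec_mulVec, Matrix.mulVec_mulVec]
      simp only [Matrix.mul_assoc]
    rw [heq]
    show ∑ l, ((1 / ((m : ℝ) * δ)) * (diagonal (x i) * Pᵀ * (Vh i)⁻¹) k l) *
        (P *ᵥ (diagonal (x i) *ᵥ θ₀)) l = (1 / ((m : ℝ) * δ)) *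
        ∑ l, (diagonal (x i) * Pᵀ * (Vh i)⁻¹) k l * (P *ᵥ (diagonal (x i) *ᵥ θ₀)) l
    rw [Finset.mul_sum]
    exact Finset.sum_congr rfl fun l _ => mul_assoc _ _ _
  funext j
  simp only [hHH]
  have hexp2 : ∀ ω : Ω, ((ipoDu δ x P Vh)⁻¹ *ᵥ ipoD δ x P Vh (fun i => y i ω)) j
      = ∑ k, (ipoDu δ x P Vh)⁻¹ j k * ipoD δ x P Vh (fun i => y i ω) k := fun ω => rfl
  simp only [hexp2]
  have hintD : ∀ k : Fin dx, Integrable (fun ω => ipoD δ x P Vh (fun i => y i ω) k) μ := by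
    intro k
    simp only [hexp k]
    exact MeasureTheory.integrable_finset_sum _ fun i _ =>
      MeasureTheory.integrable_finset_sum _ fun l _ => (hint i l).const_mul _
  rw [MeasureTheory.integral_finset_sum _ (fun k _ => (hintD k).const_mul _)]
  have h2 : ∀ k : Fin dx, (∫ ω, (ipoDu δ x P Vh)⁻¹ j k * ipoD δ x P Vh (fun i => y i ω) k ∂μ)
      = (ipoDu δ x P Vh)⁻¹ j k * (ipoDu δ x P Vh *ᵥ θ₀) k := by
    intro k
    rw [MeasureTheory.integral_const_mul, hD k]
  simp only [h2]
  have h3 : ∑ k, (ipoDu δ x P Vh)⁻¹ j k * (ipoDu δ x P Vh *ᵥ θ₀) k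
      = ((ipoDu δ x P Vh)⁻¹ *ᵥ (ipoDu δ x P Vh *ᵥ θ₀)) j := rfl
  rw [h3, Matrix.mulVec_mulVec, Matrix.nonsing_inv_mul _ hDu, Matrix.one_mulVec]
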